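/- Let X be a random variable taking values x_1 < x_2 < ... < x_n with probabilities p_i = P(X = x_i), and suppose P(X = x_1) ≥ p_opt > 0. Then ∑_{i=2}^n [P(X = x_i)/P(X ≤ x_i)] · (1/√(P(X < x_i))) ≤ 2/√(p_opt). -/

import Mathlib

private lemma tele_sum (f : ℕ → ℝ) : ∀ n, 1 ≤ n →
    ∑ i ∈ Finset.Icc 2 n, (f (i - 1) - f i) = f 1 - f n := by
  intro n hn
  induction n with
  | zero => omega
  | succ m ih =>
    rcases Nat.lt_or_ge 1 (m + 1) with h | h
    · have hm : 1 ≤ m := by omega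
      rw [Finset.sum_Icc_succ_top (by omega : 2 ≤ m + 1), ih hm]
      simp
    · have : m + 1 = 1 := by omega
      rw [this]; simp

private lemma key_ineq (a b : ℝ) (ha : 0 < a) (hab : a ≤ b) :
    (b - a) / b * (1 / Real.sqrt a) ≤ 2 * (1 / Real.sqrt a - 1 / Real.sqrt b) := by
  have hb : 0 < b := lt_of_lt_of_le ha hab
  have hsa : 0 < Real.sqrt a := Real.sqrt_pos.mpr ha
  have hsb : 0 < Real.sqrt b := Real.sqrt_pos.mpr hb
  have hsab : Real.sqrt a ≤ Real.sqrt b := Real.sqrt_le_sqrt hab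
  have ha' : a = Real.sqrt a ^ 2 := (Real.sq_sqrt ha.le).symm
  have hb' : b = Real.sqrt b ^ 2 := (Real.sq_sqrt hb.le).symm
  set sa := Real.sqrt a
  set sb := Real.sqrt b
  rw [ha', hb']
  have h : 2 * (1 / sa - 1 / sb) - (sb ^ 2 - sa ^ 2) / sb ^ 2 * (1 / sa)
      = (sb - sa) ^ 2 / (sb ^ 2 * sa) := by
    field_simp
    ring
  have h2 : 0 ≤ (sb - sa) ^ 2 / (sb ^ 2 * sa) := by positivity
  linarith

/-- Let `X` take values `x_1 < … < x_n` with probabilities `p_i ≥ 0`, `∑ p_i = 1`,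
and suppose `P(X = x_1) = p_1 ≥ p_opt > 0`. Then
`∑_{i=2}^n [P(X=x_i)/P(X≤x_i)] · (1/√(P(X<x_i))) ≤ 2/√p_opt`, where
`P(X ≤ x_i) = ∑_{j≤i} p_j` and `P(X < x_i) = ∑_{j<i} p_j`. -/
theorem minimum_finding_query_sum_bound (n : ℕ) (hn : 1 ≤ n) (p : ℕ → ℝ)
    (hp : ∀ i ∈ Finset.Icc 1 n, 0 ≤ p i)
    (hsum : ∑ i ∈ Finset.Icc 1 n, p i = 1)
    (popt : ℝ) (hpopt : 0 < popt) (hp1 : popt ≤ p 1) :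
    (∑ i ∈ Finset.Icc 2 n,
        (p i / ∑ j ∈ Finset.Icc 1 i, p j) *
          (1 / Real.sqrt (∑ j ∈ Finset.Icc 1 (i - 1), p j)))
      ≤ 2 / Real.sqrt popt := by
  set S : ℕ → ℝ := fun i => ∑ j ∈ Finset.Icc 1 i, p j with hS
  have hS1 : S 1 = p 1 := by simp [hS]
  have hSlb : ∀ i, 1 ≤ i → i ≤ n → popt ≤ S i := by
    intro i h1 h2
    refine le_trans hp1 ?_
    refine Finset.single_le_sum (f := p) (fun j hj => hp j ?_) (by simp [h1])
    simp only [Finset.mem_Icc] at hj ⊢; omega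
  have hstep : ∀ i ∈ Finset.Icc 2 n,
      p i / S i * (1 / Real.sqrt (S (i - 1))) ≤
        2 * (1 / Real.sqrt (S (i - 1)) - 1 / Real.sqrt (S i)) := by
    intro i hi
    simp only [Finset.mem_Icc] at hi
    have hprev : popt ≤ S (i - 1) := hSlb (i - 1) (by omega) (by omega)
    have hdecomp : S i = S (i - 1) + p i := by
      rw [hS]
      simp only []
      rw [show i = (i - 1) + 1 by omega, Finset.sum_Icc_succ_top (by omega : 1 ≤ i - 1 + 1)]
      simp
    have hpi : 0 ≤ p i := hp i (by simp only [Finset.mem_Icc]; omega)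
    have ha : 0 < S (i - 1) := lt_of_lt_of_le hpopt hprev
    have hab : S (i - 1) ≤ S i := by rw [hdecomp]; linarith
    have := key_ineq (S (i - 1)) (S i) ha hab
    have hpi' : p i = S i - S (i - 1) := by rw [hdecomp]; ring
    rw [hpi']
    exact this
  calc (∑ i ∈ Finset.Icc 2 n, p i / S i * (1 / Real.sqrt (S (i - 1))))
      ≤ ∑ i ∈ Finset.Icc 2 n, 2 * (1 / Real.sqrt (S (i - 1)) - 1 / Real.sqrt (S i)) :=
        Finset.sum_le_sum hstep
    _ = 2 * (1 / Real.sqrt (S 1) - 1 / Real.sqrt (S n)) := by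
        rw [← Finset.mul_sum, tele_sum (fun i => 1 / Real.sqrt (S i)) n hn]
    _ ≤ 2 * (1 / Real.sqrt (S 1)) := by
        have : 0 ≤ 1 / Real.sqrt (S n) := by positivity
        linarith
    _ ≤ 2 / Real.sqrt popt := by
        rw [hS1, mul_one_div]
        apply div_le_div_of_nonneg_left (by norm_num) (Real.sqrt_pos.mpr hpopt)
        exact Real.sqrt_le_sqrt hp1
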